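/- Let d ≥ 3 and k ≥ 1, and let S₁, …, S_k be a coindependent family of affine codimension-2 subspaces of F₂^d with nonempty common intersection U = ⋂ S_i. If H is an affine hyperplane of F₂^d that neither contains U nor is disjoint from U, then the symmetric difference H + S₁ + ⋯ + S_k has cardinality exactly 2^{d-1}. -/

import Mathlib

open scoped Classical

lemma key_codim1 (d : ℕ) (WH : Submodule (ZMod 2) (Fin d → ZMod 2))
    (hWH : Module.finrank (ZMod 2) WH = d - 1) (hd : 1 ≤ d)
    (a b : Fin d → ZMod 2) (ha : a ∉ WH) (hb : b ∉ WH) : a + b ∈ WH := by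
  have htot : Module.finrank (ZMod 2) (Fin d → ZMod 2) = d := Module.finrank_fin_fun _
  have htop : WH ⊔ Submodule.span (ZMod 2) {a} = ⊤ := by
    have hlt : WH < WH ⊔ Submodule.span (ZMod 2) {a} := by
      refine lt_of_le_of_ne le_sup_left ?_
      intro h
      have hmem : a ∈ WH ⊔ Submodule.span (ZMod 2) {a} :=
        Submodule.mem_sup_right (Submodule.mem_span_singleton_self a)
      rw [← h] at hmem
      exact ha hmem
    have h1 : Module.finrank (ZMod 2) WH
        < Module.finrank (ZMod 2) ↥(WH ⊔ Submodule.span (ZMod 2) {a}) :=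
      Submodule.finrank_lt_finrank_of_lt hlt
    have h2 : Module.finrank (ZMod 2) ↥(WH ⊔ Submodule.span (ZMod 2) {a}) ≤ d := by
      have := Submodule.finrank_le (WH ⊔ Submodule.span (ZMod 2) {a})
      rwa [htot] at this
    apply Submodule.eq_top_of_finrank_eq
    rw [htot]; omega
  have hb' : b ∈ WH ⊔ Submodule.span (ZMod 2) {a} := by rw [htop]; exact Submodule.mem_top
  obtain ⟨w, hw, s, hs, hws⟩ := Submodule.mem_sup.mp hb'
  obtain ⟨c, rfl⟩ := Submodule.mem_span_singleton.mp hs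
  have haa : a + a = 0 := by
    funext i
    exact CharTwo.add_self_eq_zero (a i)
  fin_cases c
  · exfalso
    apply hb
    rw [← hws]
    convert hw using 1
    exact (show w + (0 : ZMod 2) • a = w by rw [zero_smul, add_zero])
  · have h1 : b = w + a := by rw [← hws]; simp; exact one_smul (ZMod 2) a
    have : a + b = w + (a + a) := by rw [h1]; ring
    rw [this, haa, add_zero]
    exact hw

theorem cleansing_gives_midset
    (d k : ℕ) (hd : 3 ≤ d) (hk : 1 ≤ k)
    (p : Fin d → ZMod 2)
    (W : Fin k → Submodule (ZMod 2) (Fin d → ZMod 2))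
    (hcodim : ∀ i, Module.finrank (ZMod 2) (W i) = d - 2)
    (hcoind : iSupIndep (fun i => (W i).dualAnnihilator))
    (q : Fin d → ZMod 2)
    (WH : Submodule (ZMod 2) (Fin d → ZMod 2))
    (hWH : Module.finrank (ZMod 2) WH = d - 1)
    (H : Set (Fin d → ZMod 2)) (hH : H = {x | x - q ∈ WH})
    (U : Set (Fin d → ZMod 2)) (hU : U = ⋂ i, {x | x - p ∈ W i})
    (hnotsub : ¬ U ⊆ H)
    (hmeet : (U ∩ H).Nonempty) :
    Set.ncard (symmDiff H {x : Fin d → ZMod 2 |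
        Odd (Finset.univ.filter (fun i : Fin k => x - p ∈ W i)).card})
      = 2 ^ (d - 1) := by
  set S : Set (Fin d → ZMod 2) := {x : Fin d → ZMod 2 |
      Odd (Finset.univ.filter (fun i : Fin k => x - p ∈ W i)).card} with hS
  obtain ⟨u, huU, huH⟩ := hmeet
  obtain ⟨u', hu'U, hu'H⟩ := Set.not_subset.mp hnotsub
  set v : Fin d → ZMod 2 := u' - u with hv
  -- v lies in every W i
  have hvW : ∀ i, v ∈ W i := by
    intro i
    have h1 : u - p ∈ W i := by
      have := Set.mem_iInter.mp (hU ▸ huU) i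
      exact this
    have h2 : u' - p ∈ W i := by
      have := Set.mem_iInter.mp (hU ▸ hu'U) i
      exact this
    have : (u' - p) - (u - p) ∈ W i := sub_mem h2 h1
    simpa [hv, sub_sub_sub_cancel_right] using this
  -- v not in WH
  have hvWH : v ∉ WH := by
    intro hmem
    apply hu'H
    rw [hH]
    have h1 : u - q ∈ WH := by rw [hH] at huH; exact huH
    have : v + (u - q) ∈ WH := add_mem hmem h1
    have heq : u' - q = v + (u - q) := by rw [hv]; ring
    show u' - q ∈ WH
    rw [heq]; exact this
  have hd1 : 1 ≤ d := by omega
  -- translation by v flips H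
  have hflipH : ∀ x, x + v ∈ H ↔ x ∉ H := by
    intro x
    rw [hH]
    simp only [Set.mem_setOf_eq]
    have heq : x + v - q = (x - q) + v := by ring
    rw [heq]
    constructor
    · intro hmem hxq
      exact hvWH (by simpa using sub_mem hmem hxq)
    · intro hxq
      exact key_codim1 d WH hWH hd1 (x - q) v hxq hvWH
  -- translation by v fixes S
  have hfixS : ∀ x, x + v ∈ S ↔ x ∈ S := by
    intro x
    have hfe : ∀ i : Fin k, (x + v - p ∈ W i) ↔ (x - p ∈ W i) := by
      intro i
      have heq : x + v - p = (x - p) + v := by ring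
      rw [heq]
      constructor
      · intro hmem
        simpa using sub_mem hmem (hvW i)
      · intro hmem
        exact add_mem hmem (hvW i)
    simp only [hS, Set.mem_setOf_eq]
    congr! 2
    apply Finset.filter_congr
    intro i _
    simp [hfe i]
  -- translation flips the symmetric difference
  have hflipA : ∀ x, x + v ∈ symmDiff H S ↔ x ∉ symmDiff H S := by
    intro x
    simp only [Set.mem_symmDiff, hflipH x, hfixS x]
    tauto
  have hvv : v + v = 0 := by
    funext i
    exact CharTwo.add_self_eq_zero (v i)
  have himg : (fun x => x + v) '' (symmDiff H S) = (symmDiff H S)ᶜ := by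
    ext y
    constructor
    · rintro ⟨x, hx, rfl⟩
      exact fun h => (hflipA x).mp h hx
    · intro hy
      refine ⟨y + v, (hflipA y).mpr hy, ?_⟩
      show y + v + v = y
      rw [add_assoc, hvv, add_zero]
  have hinj : Function.Injective (fun x : Fin d → ZMod 2 => x + v) :=
    add_left_injective v
  have h1 : (symmDiff H S)ᶜ.ncard = (symmDiff H S).ncard := by
    rw [← himg, Set.ncard_image_of_injective _ hinj]
  have h2 : (symmDiff H S).ncard + (symmDiff H S)ᶜ.ncard = 2 ^ d := by
    rw [Set.ncard_add_ncard_compl]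
    simp [Nat.card_eq_fintype_card]
  have h3 : 2 ^ d = 2 * 2 ^ (d - 1) := by
    have hsum : d - 1 + 1 = d := by omega
    have h4 : 2 ^ (d - 1 + 1) = 2 * 2 ^ (d - 1) := by rw [pow_succ]; ring
    rw [hsum] at h4
    exact h4
  omega
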